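/- For any string S of length n ≥ 2, the sum, over all distinct maximal repeats w of S, of the number of right-extensions of w in S (i.e., of |{β ∈ Σ : occ_S(wβ) ≥ 1}|) is at most 2n − 2. -/

import Mathlib

variable {Γ : Type*} [DecidableEq Γ]

/-- `occ S w` is the number of occurrences of `w` as a contiguous substring of `S`,
i.e., the number of (0-based) indices `i` with `S[i..i+|w|-1] = w`. -/
def occ (S w : List Γ) : ℕ :=
  ((List.range S.length).filter fun i => (S.drop i).take w.length = w).length

/-- The finset of occurrence positions. -/
def occs (S w : List Γ) : Finset ℕ :=
  (Finset.range S.length).filter fun i => (S.drop i).take w.length = w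

lemma occ_eq_card (S w : List Γ) : occ S w = (occs S w).card := rfl

lemma mem_occs {S w : List Γ} {i : ℕ} :
    i ∈ occs S w ↔ i < S.length ∧ (S.drop i).take w.length = w := by
  simp [occs]

lemma add_le_of_mem_occs {S w : List Γ} {i : ℕ} (h : i ∈ occs S w) :
    i + w.length ≤ S.length := by
  rw [mem_occs] at h
  have := congrArg List.length h.2
  simp at this
  omega

lemma getElem?_of_mem_occs {S w : List Γ} {i : ℕ} (h : i ∈ occs S w) {m : ℕ}
    (hm : m < w.length) : S[i + m]? = some w[m] := by
  rw [mem_occs] at h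
  have h1 : (List.take w.length (List.drop i S))[m]? = (List.drop i S)[m]? := by
    rw [List.getElem?_take, if_pos hm]
  rw [← List.getElem?_drop, ← h1, h.2, List.getElem?_eq_getElem hm]

lemma occs_mono {S w u : List Γ} (h : w <+: u) : occs S u ⊆ occs S w := by
  intro i hi
  rw [mem_occs] at hi ⊢
  refine ⟨hi.1, ?_⟩
  calc List.take w.length (List.drop i S)
      = List.take w.length (List.take u.length (List.drop i S)) := by
        rw [List.take_take, min_eq_left h.length_le]
    _ = List.take w.length u := by rw [hi.2]
    _ = w := (List.prefix_iff_eq_take.1 h).symm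

lemma mem_occs_append {S w : List Γ} {β : Γ} {i : ℕ} :
    i ∈ occs S (w ++ [β]) ↔ i ∈ occs S w ∧ S[i + w.length]? = some β := by
  constructor
  · intro h
    have h1 : i ∈ occs S w := occs_mono (List.prefix_append w [β]) h
    refine ⟨h1, ?_⟩
    have := getElem?_of_mem_occs h (m := w.length) (by simp)
    simpa using this
  · rintro ⟨h1, h2⟩
    rw [mem_occs] at h1 ⊢
    refine ⟨h1.1, ?_⟩
    rw [List.length_append, List.length_singleton, List.take_succ, h1.2,
      List.getElem?_drop, h2]
    rfl

lemma occ_le_of_prefix {S w u : List Γ} (h : w <+: u) : occ S u ≤ occ S w := by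
  rw [occ_eq_card, occ_eq_card]
  exact Finset.card_le_card (occs_mono h)

lemma occ_pos_iff {S w : List Γ} : 1 ≤ occ S w ↔ (occs S w).Nonempty := by
  rw [occ_eq_card]
  exact ⟨fun h => Finset.card_pos.1 h, fun h => Finset.card_pos.2 h⟩

lemma suffix_of_end_occ {S w : List Γ} {i : ℕ} (h : i ∈ occs S w)
    (he : i + w.length = S.length) : w <:+ S := by
  rw [mem_occs] at h
  refine ⟨S.take i, ?_⟩
  have hd : (S.drop i).length = w.length := by simp; omega
  have h3 : List.take w.length (S.drop i) = S.drop i := by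
    rw [← hd, List.take_length]
  rw [← h.2, h3, List.take_append_drop]

lemma end_occ_of_suffix {S w : List Γ} (h : w <:+ S) (hw : w ≠ []) :
    S.length - w.length ∈ occs S w := by
  obtain ⟨t, ht⟩ := h
  have hlen : t.length + w.length = S.length := by
    rw [← ht]; simp
  rw [mem_occs]
  have hwl : 0 < w.length := List.length_pos_iff.2 hw
  constructor
  · omega
  · have : S.length - w.length = t.length := by omega
    rw [this, ← ht, List.drop_left]
    rw [List.take_length]

/-- Strings comparable when occurring at same position. -/
lemma prefix_of_occ_occ {S w u : List Γ} {i : ℕ} (hw : i ∈ occs S w)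
    (hu : i ∈ occs S u) (hl : w.length ≤ u.length) : w <+: u := by
  rw [mem_occs] at hw hu
  rw [List.prefix_iff_eq_take, ← hu.2, List.take_take, min_eq_left hl, hw.2]

/-- `Phi S w` is the set of pairs `(α, β)` of characters such that
`occ S (αwβ) = occ S (αw) = occ S (wβ) = 1`. -/
def Phi (S w : List Γ) : Set (Γ × Γ) :=
  {p | occ S (p.1 :: (w ++ [p.2])) = 1 ∧ occ S (p.1 :: w) = 1 ∧ occ S (w ++ [p.2]) = 1}

/-- The net frequency of `w` in `S`. -/
noncomputable def phi (S w : List Γ) : ℕ := (Phi S w).ncard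

/-- `w` is a left-maximal repeat candidate: `w` is a prefix of `S`, or
two distinct characters immediately precede occurrences of `w` in `S`. -/
def LeftMaximal (S w : List Γ) : Prop :=
  w <+: S ∨ ∃ α α' : Γ, α ≠ α' ∧ 1 ≤ occ S (α :: w) ∧ 1 ≤ occ S (α' :: w)

/-- `w` is a right-maximal repeat candidate: `w` is a suffix of `S`, or
two distinct characters immediately follow occurrences of `w` in `S`. -/
def RightMaximal (S w : List Γ) : Prop :=
  w <:+ S ∨ ∃ β β' : Γ, β ≠ β' ∧ 1 ≤ occ S (w ++ [β]) ∧ 1 ≤ occ S (w ++ [β'])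

lemma not_rm_lt {S u : List Γ} {i : ℕ} (hrm : ¬ RightMaximal S u)
    (hi : i ∈ occs S u) : i + u.length < S.length := by
  have h := add_le_of_mem_occs hi
  rcases lt_or_eq_of_le h with h' | h'
  · exact h'
  · exact absurd (Or.inl (suffix_of_end_occ hi h')) hrm

lemma closure_exists (S : List Γ) : ∀ (k : ℕ) (u : List Γ),
    S.length - u.length ≤ k → u ≠ [] → 2 ≤ occ S u →
    ∃ v, u <+: v ∧ 2 ≤ occ S v ∧ RightMaximal S v ∧
      ∀ p, u <+: p → p <+: v → p ≠ v → ¬ RightMaximal S p := by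
  have base : ∀ u : List Γ, 2 ≤ occ S u → RightMaximal S u →
      ∃ v, u <+: v ∧ 2 ≤ occ S v ∧ RightMaximal S v ∧
        ∀ p, u <+: p → p <+: v → p ≠ v → ¬ RightMaximal S p := by
    intro u h2 hrm
    refine ⟨u, List.prefix_rfl, h2, hrm, fun p hp1 hp2 hne => ?_⟩
    exact absurd (hp1.eq_of_length (le_antisymm hp1.length_le hp2.length_le)).symm hne
  intro k
  induction k with
  | zero =>
    intro u hk hu h2
    by_cases hrm : RightMaximal S u
    · exact base u h2 hrm
    · exfalso
      obtain ⟨i0, hi0⟩ : (occs S u).Nonempty := occ_pos_iff.1 (by omega)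
      have := not_rm_lt hrm hi0
      omega
  | succ k ih =>
    intro u hk hu h2
    by_cases hrm : RightMaximal S u
    · exact base u h2 hrm
    · obtain ⟨i0, hi0⟩ : (occs S u).Nonempty := occ_pos_iff.1 (by omega)
      have hi0lt := not_rm_lt hrm hi0
      set β0 := S[i0 + u.length]'hi0lt with hβ0def
      have hβ0 : S[i0 + u.length]? = some β0 := List.getElem?_eq_getElem hi0lt
      have hocceq : occs S (u ++ [β0]) = occs S u := by
        apply Finset.Subset.antisymm (occs_mono (List.prefix_append _ _))
        intro i hi
        rw [mem_occs_append]
        refine ⟨hi, ?_⟩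
        have hilt := not_rm_lt hrm hi
        have hβi : S[i + u.length]? = some (S[i + u.length]'hilt) :=
          List.getElem?_eq_getElem hilt
        by_contra hne
        have hne' : S[i + u.length]'hilt ≠ β0 := by
          intro h; rw [h] at hβi; exact hne hβi
        apply hrm
        refine Or.inr ⟨_, _, hne', ?_, ?_⟩
        · exact occ_pos_iff.2 ⟨i, mem_occs_append.2 ⟨hi, hβi⟩⟩
        · exact occ_pos_iff.2 ⟨i0, mem_occs_append.2 ⟨hi0, hβ0⟩⟩
      have h2' : 2 ≤ occ S (u ++ [β0]) := by
        rw [occ_eq_card, hocceq]; exact h2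
      obtain ⟨v, hpre, hv2, hvrm, hvmid⟩ := ih (u ++ [β0])
        (by simp; omega) (by simp) h2'
      refine ⟨v, (List.prefix_append u [β0]).trans hpre, hv2, hvrm, ?_⟩
      intro p hp1 hp2 hne
      rcases eq_or_lt_of_le hp1.length_le with heq | hlt
      · have : u = p := hp1.eq_of_length heq
        rw [← this]; exact hrm
      · refine hvmid p ?_ hp2 hne
        exact List.prefix_of_prefix_length_le hpre hp2 (by simp; omega) |>.trans (List.prefix_rfl)

def jpos (S v : List Γ) : ℕ := if h : (occs S v).Nonempty then (occs S v).min' h else 0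

def Qset (S v : List Γ) : Finset ℕ :=
  (occs S v).filter fun i => S[i + v.length]? ≠ S[jpos S v + v.length]?

def fpos (S v : List Γ) : ℕ := if h : (Qset S v).Nonempty then (Qset S v).min' h else 0

lemma jpos_mem {S v : List Γ} (h : (occs S v).Nonempty) : jpos S v ∈ occs S v := by
  rw [jpos, dif_pos h]; exact (occs S v).min'_mem h

lemma jpos_le {S v : List Γ} {i : ℕ} (hi : i ∈ occs S v) : jpos S v ≤ i := by
  rw [jpos, dif_pos ⟨i, hi⟩]; exact Finset.min'_le _ _ hi

lemma jpos_not_mem_Q {S v : List Γ} : jpos S v ∉ Qset S v := by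
  rw [Qset, Finset.mem_filter]
  push_neg
  intro _
  simp

lemma fpos_mem {S v : List Γ} (h : (Qset S v).Nonempty) : fpos S v ∈ Qset S v := by
  rw [fpos, dif_pos h]; exact (Qset S v).min'_mem h

lemma fpos_min {S v : List Γ} {i : ℕ} (hi : i ∈ Qset S v) : fpos S v ≤ i := by
  rw [fpos, dif_pos ⟨i, hi⟩]; exact Finset.min'_le _ _ hi

lemma Q_nonempty {S v : List Γ} (hv : v ≠ []) (h2 : 2 ≤ occ S v)
    (hrm : RightMaximal S v) : (Qset S v).Nonempty := by
  have hne : (occs S v).Nonempty := occ_pos_iff.1 (by omega)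
  have hj := jpos_mem hne
  obtain ⟨x, hx, hxj⟩ : ∃ x ∈ occs S v, x ≠ jpos S v :=
    Finset.exists_mem_ne (by rw [occ_eq_card] at h2; omega) _
  have hjx : jpos S v < x := lt_of_le_of_ne (jpos_le hx) (Ne.symm hxj)
  have hxle := add_le_of_mem_occs hx
  have hjlt : jpos S v + v.length < S.length := by omega
  have hjel : S[jpos S v + v.length]? = some (S[jpos S v + v.length]'hjlt) :=
    List.getElem?_eq_getElem hjlt
  rcases hrm with hsuf | ⟨β, β', hne', h1, h1'⟩
  · refine ⟨S.length - v.length, ?_⟩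
    have hiocc := end_occ_of_suffix hsuf hv
    rw [Qset, Finset.mem_filter]
    refine ⟨hiocc, ?_⟩
    have hvl : v.length ≤ S.length := hsuf.length_le
    have : S.length - v.length + v.length = S.length := by omega
    rw [this, List.getElem?_eq_none le_rfl, hjel]
    simp
  · obtain ⟨i1, hi1⟩ := occ_pos_iff.1 h1
    obtain ⟨i2, hi2⟩ := occ_pos_iff.1 h1'
    rw [mem_occs_append] at hi1 hi2
    by_cases hc : S[jpos S v + v.length]? = some β
    · refine ⟨i2, ?_⟩
      rw [Qset, Finset.mem_filter]
      exact ⟨hi2.1, by rw [hi2.2, hc]; simp [Ne.symm hne']⟩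
    · refine ⟨i1, ?_⟩
      rw [Qset, Finset.mem_filter]
      exact ⟨hi1.1, by rw [hi1.2]; exact fun h => hc h.symm⟩

lemma fpos_mem_Ioo {S v : List Γ} (hv : v ≠ []) (h2 : 2 ≤ occ S v)
    (hrm : RightMaximal S v) : fpos S v ∈ Finset.Ioo 0 S.length := by
  have hQ := Q_nonempty hv h2 hrm
  have hf := fpos_mem hQ
  rw [Qset, Finset.mem_filter] at hf
  have h1 : fpos S v < S.length := (mem_occs.1 hf.1).1
  have h2' : jpos S v ≤ fpos S v := jpos_le hf.1
  have h3 : jpos S v ≠ fpos S v := by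
    intro h
    exact jpos_not_mem_Q (h ▸ fpos_mem hQ)
  rw [Finset.mem_Ioo]
  omega

lemma fpos_inj_aux {S v v' : List Γ} (hv : v ≠ []) (h2 : 2 ≤ occ S v)
    (hrm : RightMaximal S v) (hv' : v' ≠ []) (h2' : 2 ≤ occ S v')
    (hrm' : RightMaximal S v') (hlen : v.length ≤ v'.length)
    (hf : fpos S v = fpos S v') : v = v' := by
  have hQ := Q_nonempty hv h2 hrm
  have hQ' := Q_nonempty hv' h2' hrm'
  have hiQ : fpos S v ∈ Qset S v := fpos_mem hQ
  have hiQ' : fpos S v ∈ Qset S v' := hf ▸ fpos_mem hQ'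
  rw [Qset, Finset.mem_filter] at hiQ hiQ'
  rcases eq_or_lt_of_le hlen with heq | hlt
  · have e1 := (mem_occs.1 hiQ.1).2
    have e2 := (mem_occs.1 hiQ'.1).2
    rw [← e1, ← e2, heq]
  · exfalso
    have hpre : v <+: v' := prefix_of_occ_occ hiQ.1 hiQ'.1 hlen
    have hj'v : jpos S v' ∈ occs S v := occs_mono hpre (jpos_mem ⟨_, hiQ'.1⟩)
    have hj'lt : jpos S v' < fpos S v := by
      have h1 : jpos S v' ≤ fpos S v := jpos_le hiQ'.1
      have h2'' : jpos S v' ≠ fpos S v := by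
        intro h
        exact jpos_not_mem_Q (S := S) (v := v') (by
          rw [h, hf]; exact fpos_mem hQ')
      omega
    have star : S[fpos S v + v.length]? = S[jpos S v' + v.length]? := by
      have ha := getElem?_of_mem_occs hiQ'.1 (m := v.length) hlt
      have hb := getElem?_of_mem_occs (jpos_mem ⟨_, hiQ'.1⟩) (m := v.length) hlt
      rw [ha, hb]
    by_cases hcase : jpos S v' ∈ Qset S v
    · have := fpos_min hcase
      omega
    · rw [Qset, Finset.mem_filter] at hcase
      push_neg at hcase
      have heq2 := hcase hj'v
      exact hiQ.2 (by rw [star, heq2])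

noncomputable def clv (S u : List Γ) : List Γ :=
  if h : u ≠ [] ∧ 2 ≤ occ S u then
    Classical.choose (closure_exists S (S.length - u.length) u le_rfl h.1 h.2)
  else u

lemma clv_spec {S u : List Γ} (hu : u ≠ []) (h2 : 2 ≤ occ S u) :
    u <+: clv S u ∧ 2 ≤ occ S (clv S u) ∧ RightMaximal S (clv S u) ∧
      ∀ p, u <+: p → p <+: clv S u → p ≠ clv S u → ¬ RightMaximal S p := by
  rw [clv, dif_pos ⟨hu, h2⟩]
  exact Classical.choose_spec (closure_exists S (S.length - u.length) u le_rfl hu h2)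

lemma clv_inj_aux' {S w w' : List Γ} {β β' : Γ}
    (hrm' : RightMaximal S w')
    (h2 : 2 ≤ occ S (w ++ [β])) (h2' : 2 ≤ occ S (w' ++ [β']))
    (hlen : (w ++ [β]).length ≤ (w' ++ [β']).length)
    (hcl : clv S (w ++ [β]) = clv S (w' ++ [β'])) : w = w' ∧ β = β' := by
  obtain ⟨hp, hv2, hvrm, hmid⟩ := clv_spec (by simp) h2 (S := S) (u := w ++ [β])
  obtain ⟨hp', hv2', hvrm', hmid'⟩ := clv_spec (by simp) h2' (S := S) (u := w' ++ [β'])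
  rw [hcl] at hp hmid
  rcases eq_or_lt_of_le hlen with heq | hlt
  · have hpe : (w ++ [β]) <+: (w' ++ [β']) :=
      List.prefix_of_prefix_length_le hp hp' hlen
    have he : w ++ [β] = w' ++ [β'] := hpe.eq_of_length heq
    have hwl : w.length = w'.length := by
      have := congrArg List.length he; simp at this; omega
    obtain ⟨e1, e2⟩ := List.append_inj he hwl
    exact ⟨e1, by simpa using e2⟩
  · exfalso
    have hlw : (w ++ [β]).length ≤ w'.length := by simp at hlt ⊢; omega
    have hw'v : w' <+: clv S (w' ++ [β']) := (List.prefix_append w' [β']).trans hp'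
    have hup : (w ++ [β]) <+: w' :=
      List.prefix_of_prefix_length_le hp hw'v hlw
    have hw'ne : w' ≠ clv S (w' ++ [β']) := by
      intro h
      have h1 := congrArg List.length h
      have h2'' := hp'.length_le
      simp at h1 h2''
      omega
    exact hmid w' hup hw'v hw'ne hrm'

/-- `w` is a maximal repeat of `S`: a nonempty string occurring at least twice in `S`
that is both left-maximal and right-maximal. -/
def MaximalRepeat (S w : List Γ) : Prop :=
  w ≠ [] ∧ 2 ≤ occ S w ∧ LeftMaximal S w ∧ RightMaximal S w

lemma part1_aux {S w w' : List Γ} {β β' : Γ}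
    (hw' : MaximalRepeat S w')
    (h1 : occ S (w ++ [β]) = 1) (h1' : occ S (w' ++ [β']) = 1)
    (hlen : (w ++ [β]).length ≤ (w' ++ [β']).length)
    (hj : jpos S (w ++ [β]) = jpos S (w' ++ [β'])) : w = w' ∧ β = β' := by
  have hne : (occs S (w ++ [β])).Nonempty := occ_pos_iff.1 (by omega)
  have hne' : (occs S (w' ++ [β'])).Nonempty := occ_pos_iff.1 (by omega)
  have hi : jpos S (w ++ [β]) ∈ occs S (w ++ [β]) := jpos_mem hne
  have hi' : jpos S (w ++ [β]) ∈ occs S (w' ++ [β']) := hj ▸ jpos_mem hne'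
  have hpre : (w ++ [β]) <+: (w' ++ [β']) := prefix_of_occ_occ hi hi' hlen
  rcases eq_or_lt_of_le hlen with heq | hlt
  · have he : w ++ [β] = w' ++ [β'] := hpre.eq_of_length heq
    have hwl : w.length = w'.length := by
      have := congrArg List.length he; simp at this; omega
    obtain ⟨e1, e2⟩ := List.append_inj he hwl
    exact ⟨e1, by simpa using e2⟩
  · exfalso
    have hlw : (w ++ [β]).length ≤ w'.length := by simp at hlt ⊢; omega
    have hup : (w ++ [β]) <+: w' :=
      List.prefix_of_prefix_length_le hpre (List.prefix_append w' [β']) hlw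
    have := occ_le_of_prefix hup (S := S)
    have h2' := hw'.2.1
    omega

lemma mem_toFinset_of_ext {S w : List Γ} {β : Γ} (h : 1 ≤ occ S (w ++ [β])) :
    β ∈ S.toFinset := by
  obtain ⟨i, hi⟩ := occ_pos_iff.1 h
  rw [mem_occs_append] at hi
  obtain ⟨hlt, he⟩ := List.getElem?_eq_some_iff.1 hi.2
  rw [List.mem_toFinset, ← he]
  exact List.getElem_mem hlt

/-- For any string `S` of length `n ≥ 2`, the sum over all distinct
maximal repeats `w` of `S` of the number of right-extensions of `w` in `S` is at most
`2n - 2`. -/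
theorem stmt17 (S : List Γ) (hn : 2 ≤ S.length) :
    ∑ᶠ w ∈ {w : List Γ | MaximalRepeat S w}, {β : Γ | 1 ≤ occ S (w ++ [β])}.ncard
      ≤ 2 * S.length - 2 := by
  classical
  -- finiteness of the set of maximal repeats
  have hM : {w : List Γ | MaximalRepeat S w}.Finite := by
    apply Set.Finite.subset
      (((Finset.range (S.length + 1) ×ˢ Finset.range (S.length + 1)).image
        fun p : ℕ × ℕ => (S.drop p.1).take p.2).finite_toSet)
    intro w hw
    obtain ⟨i, hi⟩ := occ_pos_iff.1 (show 1 ≤ occ S w by have := hw.2.1; omega)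
    have hle := add_le_of_mem_occs hi
    have hmem := mem_occs.1 hi
    simp only [Finset.coe_image, Set.mem_image, Finset.mem_coe, Finset.mem_product]
    refine ⟨(i, w.length), ?_, hmem.2⟩
    simp only [Finset.mem_coe, Finset.mem_product, Finset.mem_range]
    omega
  set Efin : List Γ → Finset Γ :=
    fun w => S.toFinset.filter fun β => 1 ≤ occ S (w ++ [β]) with hEdef
  have hEset : ∀ w : List Γ, {β : Γ | 1 ≤ occ S (w ++ [β])} = ↑(Efin w) := by
    intro w
    ext β
    simp only [Set.mem_setOf_eq, hEdef, Finset.coe_filter, Finset.mem_coe,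
      Set.mem_setOf_eq]
    exact ⟨fun h => ⟨mem_toFinset_of_ext h, h⟩, fun h => h.2⟩
  rw [← hM.coe_toFinset, finsum_mem_coe_finset]
  set Mfin := hM.toFinset with hMdef
  have hMmem : ∀ w, w ∈ Mfin ↔ MaximalRepeat S w := fun w => hM.mem_toFinset
  have step1 : ∑ w ∈ Mfin, {β : Γ | 1 ≤ occ S (w ++ [β])}.ncard
      = (Mfin.sigma fun w => Efin w).card := by
    rw [Finset.card_sigma]
    exact Finset.sum_congr rfl fun w _ => by rw [hEset w, Set.ncard_coe_finset]
  rw [step1]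
  set D := Mfin.sigma fun w => Efin w with hDdef
  have hDmem : ∀ q : (_ : List Γ) × Γ, q ∈ D ↔
      MaximalRepeat S q.1 ∧ 1 ≤ occ S (q.1 ++ [q.2]) := by
    intro q
    rw [hDdef, Finset.mem_sigma, hMmem, hEdef]
    simp only [Finset.mem_filter]
    constructor
    · rintro ⟨h1, _, h3⟩; exact ⟨h1, h3⟩
    · rintro ⟨h1, h2⟩; exact ⟨h1, mem_toFinset_of_ext h2, h2⟩
  have hsplit : D.card = (D.filter fun q => occ S (q.1 ++ [q.2]) = 1).card
      + (D.filter fun q => ¬ occ S (q.1 ++ [q.2]) = 1).card :=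
    (Finset.card_filter_add_card_filter_not _).symm
  have hb1 : (D.filter fun q => occ S (q.1 ++ [q.2]) = 1).card ≤ S.length - 1 := by
    have := Finset.card_le_card_of_injOn
      (fun q : (_ : List Γ) × Γ => jpos S (q.1 ++ [q.2]))
      (s := D.filter fun q => occ S (q.1 ++ [q.2]) = 1)
      (t := Finset.range (S.length - 1)) ?_ ?_
    · simpa using this
    · rintro ⟨w, β⟩ hq
      rw [Finset.mem_coe, Finset.mem_filter, hDmem] at hq
      obtain ⟨⟨hmr, hocc⟩, h1⟩ := hq
      have hne : (occs S (w ++ [β])).Nonempty := occ_pos_iff.1 hocc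
      have hj := jpos_mem hne
      have hle := add_le_of_mem_occs hj
      have hwlen : 1 ≤ w.length := List.length_pos_iff.2 hmr.1
      show jpos S (w ++ [β]) ∈ Finset.range (S.length - 1)
      rw [Finset.mem_range]
      simp only [List.length_append, List.length_singleton] at hle
      omega
    · rintro ⟨w, β⟩ hq ⟨w', β'⟩ hq' hf
      simp only [Finset.coe_filter, Set.mem_setOf_eq, hDmem] at hq hq'
      obtain ⟨⟨hmr, _⟩, h1⟩ := hq
      obtain ⟨⟨hmr', _⟩, h1'⟩ := hq'
      simp only at hf
      rcases le_total (w ++ [β]).length (w' ++ [β']).length with hl | hl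
      · obtain ⟨e1, e2⟩ := part1_aux hmr' h1 h1' hl hf
        subst e1; subst e2; rfl
      · obtain ⟨e1, e2⟩ := part1_aux hmr h1' h1 hl hf.symm
        subst e1; subst e2; rfl
  have hb2 : (D.filter fun q => ¬ occ S (q.1 ++ [q.2]) = 1).card ≤ S.length - 1 := by
    have := Finset.card_le_card_of_injOn
      (fun q : (_ : List Γ) × Γ => fpos S (clv S (q.1 ++ [q.2])))
      (s := D.filter fun q => ¬ occ S (q.1 ++ [q.2]) = 1)
      (t := Finset.Ioo 0 S.length) ?_ ?_
    · rw [Nat.card_Ioo] at this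
      omega
    · rintro ⟨w, β⟩ hq
      rw [Finset.mem_coe, Finset.mem_filter, hDmem] at hq
      obtain ⟨⟨hmr, hocc⟩, h1⟩ := hq
      have hocc2 : 1 ≤ occ S (w ++ [β]) := hocc
      have h1' : occ S (w ++ [β]) ≠ 1 := h1
      have h2 : 2 ≤ occ S (w ++ [β]) := by omega
      obtain ⟨hp, hv2, hvrm, _⟩ := clv_spec (u := w ++ [β]) (by simp) h2
      have hvne : clv S (w ++ [β]) ≠ [] := by
        intro h
        have := hp.length_le
        rw [h] at this
        simp at this
      exact fpos_mem_Ioo hvne hv2 hvrm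
    · rintro ⟨w, β⟩ hq ⟨w', β'⟩ hq' hf
      simp only [Finset.coe_filter, Set.mem_setOf_eq, hDmem] at hq hq'
      obtain ⟨⟨hmr, hocc⟩, h1⟩ := hq
      obtain ⟨⟨hmr', hocc'⟩, h1'⟩ := hq'
      have hocca : 1 ≤ occ S (w ++ [β]) := hocc
      have hoccb : 1 ≤ occ S (w' ++ [β']) := hocc'
      have h1a : occ S (w ++ [β]) ≠ 1 := h1
      have h1b : occ S (w' ++ [β']) ≠ 1 := h1'
      have h2 : 2 ≤ occ S (w ++ [β]) := by omega
      have h2' : 2 ≤ occ S (w' ++ [β']) := by omega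
      obtain ⟨hp, hv2, hvrm, _⟩ := clv_spec (u := w ++ [β]) (by simp) h2 (S := S)
      obtain ⟨hp', hv2', hvrm', _⟩ := clv_spec (u := w' ++ [β']) (by simp) h2' (S := S)
      have hvne : clv S (w ++ [β]) ≠ [] := by
        intro h; have := hp.length_le; rw [h] at this; simp at this
      have hvne' : clv S (w' ++ [β']) ≠ [] := by
        intro h; have := hp'.length_le; rw [h] at this; simp at this
      simp only at hf
      have hveq : clv S (w ++ [β]) = clv S (w' ++ [β']) := by
        rcases le_total (clv S (w ++ [β])).length (clv S (w' ++ [β'])).length with hl | hl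
        · exact fpos_inj_aux hvne hv2 hvrm hvne' hv2' hvrm' hl hf
        · exact (fpos_inj_aux hvne' hv2' hvrm' hvne hv2 hvrm hl hf.symm).symm
      rcases le_total (w ++ [β]).length (w' ++ [β']).length with hl | hl
      · obtain ⟨e1, e2⟩ := clv_inj_aux' hmr'.2.2.2 h2 h2' hl hveq
        subst e1; subst e2; rfl
      · obtain ⟨e1, e2⟩ := clv_inj_aux' hmr.2.2.2 h2' h2 hl hveq.symm
        subst e1; subst e2; rfl
  omega
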